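/- arXiv:1403.0622 — 3 statements merged into one kernel-verified Lean document; each statement's English description precedes it below -/
import Mathlib

section
/- Let G be a κ-deletion-minimal graph with respect to total coloring. If u and v are adjacent vertices of G with deg_G(v) ≤ ⌊(κ−1)/2⌋, then deg_G(u) + deg_G(v) ≥ κ + 1. -/
open SimpleGraph

variable {V : Type*}

/-- The degree of a vertex, defined via the cardinality of its neighbor set. -/
noncomputable def deg (G : SimpleGraph V) (v : V) : ℕ := (G.neighborSet v).ncard

/-- The maximum degree of a graph. -/
noncomputable def maxDeg (G : SimpleGraph V) : ℕ := ⨆ v, deg G v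

/-- `fv` colors the vertices and `fe` colors the edges; together they form a total
coloring: adjacent vertices get distinct colors, distinct edges sharing a vertex get
distinct colors, and a vertex gets a color distinct from every edge incident to it. -/
def IsTotalColoring (G : SimpleGraph V) {α : Type*} (fv : V → α) (fe : Sym2 V → α) : Prop :=
  (∀ u v : V, G.Adj u v → fv u ≠ fv v) ∧
  (∀ e₁ e₂ : Sym2 V, e₁ ∈ G.edgeSet → e₂ ∈ G.edgeSet → e₁ ≠ e₂ →
      (∃ w : V, w ∈ e₁ ∧ w ∈ e₂) → fe e₁ ≠ fe e₂) ∧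
  (∀ (v : V) (e : Sym2 V), e ∈ G.edgeSet → v ∈ e → fv v ≠ fe e)

/-- `G` has a total coloring with `n` colors. -/
def HasTotalColoring (G : SimpleGraph V) (n : ℕ) : Prop :=
  ∃ (fv : V → Fin n) (fe : Sym2 V → Fin n), IsTotalColoring G fv fe

/-- The total chromatic number of `G`. -/
noncomputable def totalChromaticNumber (G : SimpleGraph V) : ℕ :=
  sInf {n | HasTotalColoring G n}

/-- A `κ`-deletion-minimal graph: maximum degree at most `κ - 1`, total chromatic
number greater than `κ`, but every proper subgraph has total chromatic number at most `κ`. -/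
def DeletionMinimal (κ : ℕ) (G : SimpleGraph V) : Prop :=
  (∀ v : V, deg G v ≤ κ - 1) ∧ κ < totalChromaticNumber G ∧
  ∀ H : SimpleGraph V, H < G → totalChromaticNumber H ≤ κ

/-- Avoiding a small set of colors. -/
lemma exists_avoid {κ : ℕ} (F : Set (Fin κ)) (h : F.ncard < κ) : ∃ c, c ∉ F := by
  by_contra h'
  push_neg at h'
  have : F = Set.univ := Set.eq_univ_of_forall h'
  rw [this, Set.ncard_univ, Nat.card_eq_fintype_card, Fintype.card_fin] at h
  omega

/-- Every finite graph has some total coloring. -/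
lemma exists_hasTotalColoring [Fintype V] (G : SimpleGraph V) :
    ∃ n, HasTotalColoring G n := by
  classical
  refine ⟨Fintype.card V + Fintype.card (Sym2 V), ?_⟩
  refine ⟨fun x => Fin.castAdd _ ((Fintype.equivFin V) x),
    fun e => Fin.natAdd _ ((Fintype.equivFin (Sym2 V)) e), ?_, ?_, ?_⟩
  · intro a b hab h
    have := Fin.castAdd_injective _ _ h
    exact hab.ne ((Fintype.equivFin V).injective this)
  · intro e₁ e₂ _ _ hne _ h
    have hval := congrArg Fin.val h
    simp only [Fin.coe_natAdd] at hval
    have : (Fintype.equivFin (Sym2 V)) e₁ = (Fintype.equivFin (Sym2 V)) e₂ :=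
      Fin.ext (by omega)
    exact hne ((Fintype.equivFin (Sym2 V)).injective this)
  · intro w e _ _ h
    have := congrArg Fin.val h
    simp only [Fin.coe_castAdd, Fin.coe_natAdd] at this
    have hlt : (((Fintype.equivFin V) w : Fin (Fintype.card V)) : ℕ) < Fintype.card V :=
      Fin.is_lt _
    omega

/-- Monotonicity of total colorability. -/
lemma hasTotalColoring_mono (G : SimpleGraph V) {n m : ℕ} (hnm : n ≤ m)
    (h : HasTotalColoring G n) : HasTotalColoring G m := by
  obtain ⟨fv, fe, h1, h2, h3⟩ := h
  refine ⟨Fin.castLE hnm ∘ fv, Fin.castLE hnm ∘ fe, ?_, ?_, ?_⟩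
  · intro a b hab h
    exact h1 a b hab (Fin.castLE_injective hnm h)
  · intro e₁ e₂ he₁ he₂ hne hsh h
    exact h2 e₁ e₂ he₁ he₂ hne hsh (Fin.castLE_injective hnm h)
  · intro w e he hwe h
    exact h3 w e he hwe (Fin.castLE_injective hnm h)

lemma hasTotalColoring_of_le [Fintype V] (G : SimpleGraph V) {κ : ℕ}
    (h : totalChromaticNumber G ≤ κ) : HasTotalColoring G κ := by
  obtain ⟨n, hn⟩ := exists_hasTotalColoring G
  have hmem : totalChromaticNumber G ∈ {n | HasTotalColoring G n} :=
    Nat.sInf_mem ⟨n, hn⟩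
  exact hasTotalColoring_mono G h hmem

lemma ncard_incidenceSet (G : SimpleGraph V) (v : V) :
    (G.incidenceSet v).ncard = deg G v := by
  classical
  rw [deg, ← Nat.card_coe_set_eq, ← Nat.card_coe_set_eq]
  exact Nat.card_congr (G.incidenceSetEquivNeighborSet v)

/-- in a κ-deletion-minimal graph, adjacent vertices `u, v` with
`deg v ≤ ⌊(κ-1)/2⌋` satisfy `deg u + deg v ≥ κ + 1`. -/
theorem stmt_3 {V : Type*} [Fintype V] (κ : ℕ) (G : SimpleGraph V)
    (hG : DeletionMinimal κ G) (u v : V) (huv : G.Adj u v)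
    (hv : deg G v ≤ (κ - 1) / 2) :
    κ + 1 ≤ deg G u + deg G v := by
  classical
  by_contra hlt
  push_neg at hlt
  have hsum : deg G u + deg G v ≤ κ := by omega
  -- basic degree facts
  have hdu : 1 ≤ deg G u := by
    have : v ∈ G.neighborSet u := huv
    have := Set.ncard_pos (s := G.neighborSet u) (Set.toFinite _)
    exact this.mpr ⟨v, huv⟩
  have hdv : 1 ≤ deg G v := by
    have := Set.ncard_pos (s := G.neighborSet v) (Set.toFinite _)
    exact this.mpr ⟨u, huv.symm⟩
  -- the subgraph H with edge uv deleted
  set H : SimpleGraph V := G.deleteEdges {s(u, v)} with hH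
  have hHadj : ∀ a b : V, H.Adj a b ↔ G.Adj a b ∧ s(a, b) ≠ s(u, v) := by
    intro a b
    rw [hH, deleteEdges_adj]
    simp
  have hHlt : H < G := by
    rw [lt_iff_le_not_ge]
    constructor
    · exact deleteEdges_le _
    · intro hle
      have := hle huv
      rw [hHadj] at this
      exact this.2 rfl
  have hHE : ∀ e : Sym2 V, e ∈ G.edgeSet → e ≠ s(u, v) → e ∈ H.edgeSet := by
    intro e he hne
    rw [hH, edgeSet_deleteEdges]
    exact ⟨he, by simpa using hne⟩
  -- H's neighbor sets at u and v
  have hNu : H.neighborSet u = G.neighborSet u \ {v} := by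
    ext x
    simp only [mem_neighborSet, hHadj, Set.mem_diff, Set.mem_singleton_iff]
    constructor
    · rintro ⟨h1, h2⟩
      refine ⟨h1, ?_⟩
      rintro rfl
      exact h2 rfl
    · rintro ⟨h1, h2⟩
      refine ⟨h1, ?_⟩
      intro h
      rw [Sym2.eq_iff] at h
      rcases h with ⟨-, rfl⟩ | ⟨rfl, rfl⟩
      · exact h2 rfl
      · exact G.loopless.irrefl _ h1
  have hNv : H.neighborSet v = G.neighborSet v \ {u} := by
    ext x
    simp only [mem_neighborSet, hHadj, Set.mem_diff, Set.mem_singleton_iff]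
    constructor
    · rintro ⟨h1, h2⟩
      refine ⟨h1, ?_⟩
      rintro rfl
      exact h2 (Sym2.eq_swap)
    · rintro ⟨h1, h2⟩
      refine ⟨h1, ?_⟩
      intro h
      rw [Sym2.eq_iff] at h
      rcases h with ⟨hvu, hxv⟩ | ⟨-, hxu⟩
      · exact G.loopless.irrefl v (hxv ▸ h1)
      · exact h2 hxu
  have hdHu : deg H u = deg G u - 1 := by
    have hmem : v ∈ G.neighborSet u := huv
    rw [deg, hNu, Set.ncard_diff_singleton_of_mem hmem]; rfl
  have hdHv : deg H v = deg G v - 1 := by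
    have hmem : u ∈ G.neighborSet v := huv.symm
    rw [deg, hNv, Set.ncard_diff_singleton_of_mem hmem]; rfl
  -- get a total coloring of H with κ colors
  obtain ⟨fv, fe, hc1, hc2, hc3⟩ :=
    hasTotalColoring_of_le H (hG.2.2 H hHlt)
  -- choose a color for the edge uv
  set F₁ : Set (Fin κ) :=
    fe '' (H.incidenceSet u ∪ H.incidenceSet v) ∪ {fv u} with hF₁
  have hF₁card : F₁.ncard < κ := by
    have h1 : F₁.ncard ≤ (fe '' (H.incidenceSet u ∪ H.incidenceSet v)).ncard + 1 := by
      rw [hF₁]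
      have := Set.ncard_union_le (fe '' (H.incidenceSet u ∪ H.incidenceSet v))
        ({fv u} : Set (Fin κ))
      simpa using this
    have h2 : (fe '' (H.incidenceSet u ∪ H.incidenceSet v)).ncard ≤
        (H.incidenceSet u ∪ H.incidenceSet v).ncard := Set.ncard_image_le (Set.toFinite _)
    have h3 : (H.incidenceSet u ∪ H.incidenceSet v).ncard ≤
        (H.incidenceSet u).ncard + (H.incidenceSet v).ncard := Set.ncard_union_le _ _
    rw [ncard_incidenceSet, ncard_incidenceSet, hdHu, hdHv] at h3
    omega
  obtain ⟨c, hc⟩ := exists_avoid F₁ hF₁card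
  have hc_edges : ∀ e : Sym2 V, e ∈ H.edgeSet → (u ∈ e ∨ v ∈ e) → fe e ≠ c := by
    intro e he hmem heq
    apply hc
    rw [hF₁]
    left
    refine ⟨e, ?_, heq⟩
    rcases hmem with h | h
    · exact Or.inl ⟨he, h⟩
    · exact Or.inr ⟨he, h⟩
  have hc_u : fv u ≠ c := by
    intro heq
    apply hc
    rw [hF₁]
    right
    exact heq.symm ▸ rfl
  -- the new edge coloring
  set fe' : Sym2 V → Fin κ := Function.update fe s(u, v) c with hfe'
  -- choose a new color for the vertex v
  set F₂ : Set (Fin κ) := fv '' G.neighborSet v ∪ fe' '' G.incidenceSet v with hF₂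
  have hF₂card : F₂.ncard < κ := by
    have h1 : F₂.ncard ≤ (fv '' G.neighborSet v).ncard + (fe' '' G.incidenceSet v).ncard :=
      Set.ncard_union_le _ _
    have h2 : (fv '' G.neighborSet v).ncard ≤ deg G v := Set.ncard_image_le (Set.toFinite _)
    have h3 : (fe' '' G.incidenceSet v).ncard ≤ deg G v := by
      have := Set.ncard_image_le (s := G.incidenceSet v) (f := fe') (Set.toFinite _)
      rwa [ncard_incidenceSet] at this
    omega
  obtain ⟨d, hd⟩ := exists_avoid F₂ hF₂card
  have hd_nb : ∀ x, x ∈ G.neighborSet v → fv x ≠ d := by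
    intro x hx heq
    exact hd (Or.inl ⟨x, hx, heq⟩)
  have hd_edges : ∀ e : Sym2 V, e ∈ G.edgeSet → v ∈ e → fe' e ≠ d := by
    intro e he hve heq
    exact hd (Or.inr ⟨e, ⟨he, hve⟩, heq⟩)
  -- the new vertex coloring
  set fv' : V → Fin κ := Function.update fv v d with hfv'
  have hfv'_ne : ∀ x, x ≠ v → fv' x = fv x := fun x hx => Function.update_of_ne hx _ _
  have hfv'_v : fv' v = d := Function.update_self _ _ _
  have hfe'_ne : ∀ e, e ≠ s(u, v) → fe' e = fe e := fun e he => Function.update_of_ne he _ _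
  have hfe'_uv : fe' s(u, v) = c := Function.update_self _ _ _
  -- it is a total coloring of G
  have hcol : IsTotalColoring G fv' fe' := by
    refine ⟨?_, ?_, ?_⟩
    · -- vertices
      intro a b hab
      by_cases ha : a = v
      · subst ha
        rw [hfv'_v, hfv'_ne b hab.ne']
        exact fun h => hd_nb b hab (h.symm)
      · by_cases hb : b = v
        · subst hb
          rw [hfv'_v, hfv'_ne a ha]
          exact hd_nb a hab.symm
        · rw [hfv'_ne a ha, hfv'_ne b hb]
          have hne : s(a, b) ≠ s(u, v) := by
            intro h
            rw [Sym2.eq_iff] at h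
            rcases h with ⟨-, rfl⟩ | ⟨rfl, -⟩
            · exact hb rfl
            · exact ha rfl
          exact hc1 a b ((hHadj a b).mpr ⟨hab, hne⟩)
    · -- edges
      intro e₁ e₂ he₁ he₂ hne hsh
      obtain ⟨w, hw₁, hw₂⟩ := hsh
      by_cases h1 : e₁ = s(u, v)
      · subst h1
        have h2 : e₂ ≠ s(u, v) := fun h => hne h.symm
        rw [hfe'_uv, hfe'_ne e₂ h2]
        have he₂H : e₂ ∈ H.edgeSet := hHE e₂ he₂ h2
        have hw : u ∈ e₂ ∨ v ∈ e₂ := by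
          rw [Sym2.mem_iff] at hw₁
          rcases hw₁ with rfl | rfl
          · exact Or.inl hw₂
          · exact Or.inr hw₂
        exact fun h => hc_edges e₂ he₂H hw h.symm
      · by_cases h2 : e₂ = s(u, v)
        · subst h2
          rw [hfe'_uv, hfe'_ne e₁ h1]
          have he₁H : e₁ ∈ H.edgeSet := hHE e₁ he₁ h1
          have hw : u ∈ e₁ ∨ v ∈ e₁ := by
            rw [Sym2.mem_iff] at hw₂
            rcases hw₂ with rfl | rfl
            · exact Or.inl hw₁
            · exact Or.inr hw₁
          exact hc_edges e₁ he₁H hw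
        · rw [hfe'_ne e₁ h1, hfe'_ne e₂ h2]
          exact hc2 e₁ e₂ (hHE e₁ he₁ h1) (hHE e₂ he₂ h2) hne ⟨w, hw₁, hw₂⟩
    · -- vertex vs edge
      intro w e he hwe
      by_cases hw : w = v
      · subst hw
        rw [hfv'_v]
        exact fun h => hd_edges e he hwe h.symm
      · rw [hfv'_ne w hw]
        by_cases he' : e = s(u, v)
        · subst he'
          rw [hfe'_uv]
          have : w = u := by
            rw [Sym2.mem_iff] at hwe
            rcases hwe with rfl | rfl
            · rfl
            · exact absurd rfl hw
          subst this
          exact hc_u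
        · rw [hfe'_ne e he']
          exact hc3 w e (hHE e he he') hwe
  have hHTC : HasTotalColoring G κ := ⟨fv', fe', hcol⟩
  have : totalChromaticNumber G ≤ κ := Nat.sInf_le hHTC
  have := hG.2.1
  omega
end

section
/- The triangle K₃ is totally 3-choosable: for any assignment of lists of size 3 to the three vertices and three edges of a triangle, there is a total coloring choosing each element's color from its list. -/
open SimpleGraph

variable {V : Type*}

section Aux

variable {α : Type*}

/-- Pigeonhole: a subset of `Fin 6` of size at least 4 contains one of the three
pairs `{0,1}`, `{2,3}`, `{4,5}`. -/
lemma pigeon6 : ∀ s : Finset (Fin 6), 4 ≤ s.card →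
    (0 ∈ s ∧ 1 ∈ s) ∨ (2 ∈ s ∧ 3 ∈ s) ∨ (4 ∈ s ∧ 5 ∈ s) := by decide

/-- Pigeonhole: a subset of `Fin 4` of size at least 3 contains `{0,1}` or `{2,3}`. -/
lemma pigeon4 : ∀ s : Finset (Fin 4), 3 ≤ s.card →
    (0 ∈ s ∧ 1 ∈ s) ∨ (2 ∈ s ∧ 3 ∈ s) := by decide

lemma union_le_biUnion {ι : Type*} [DecidableEq α] (t : ι → Finset α) {s : Finset ι}
    {i j : ι} (hi : i ∈ s) (hj : j ∈ s) : t i ∪ t j ⊆ s.biUnion t :=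
  Finset.union_subset (Finset.subset_biUnion_of_mem t hi) (Finset.subset_biUnion_of_mem t hj)

/-- A system of distinct representatives for four lists of size `≥ 2`, where the lists
within each of the two parts are disjoint. -/
lemma sdr4 (t : Fin 4 → Finset α) (hc : ∀ i, 2 ≤ (t i).card)
    (h01 : Disjoint (t 0) (t 1)) (h23 : Disjoint (t 2) (t 3)) :
    ∃ f : Fin 4 → α, Function.Injective f ∧ ∀ i, f i ∈ t i := by
  classical
  rw [← Finset.all_card_le_biUnion_card_iff_exists_injective]
  intro s
  rcases s.eq_empty_or_nonempty with rfl | ⟨i, hi⟩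
  · simp
  by_cases h : s.card ≤ 2
  · exact h.trans ((hc i).trans (Finset.card_le_card (Finset.subset_biUnion_of_mem t hi)))
  · have h3 : 3 ≤ s.card := by omega
    have hle4 : s.card ≤ 4 := by simpa using Finset.card_le_univ s
    rcases pigeon4 s h3 with ⟨ha, hb⟩ | ⟨ha, hb⟩
    · have hsub := union_le_biUnion t ha hb
      have hcard : 4 ≤ (t 0 ∪ t 1).card := by
        rw [Finset.card_union_of_disjoint h01]
        have := hc 0; have := hc 1; omega
      have := Finset.card_le_card hsub; omega
    · have hsub := union_le_biUnion t ha hb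
      have hcard : 4 ≤ (t 2 ∪ t 3).card := by
        rw [Finset.card_union_of_disjoint h23]
        have := hc 2; have := hc 3; omega
      have := Finset.card_le_card hsub; omega

/-- A system of distinct representatives for six lists of size `≥ 3`, where the lists
within each of the three parts are disjoint. -/
lemma sdr6 (t : Fin 6 → Finset α) (hc : ∀ i, 3 ≤ (t i).card)
    (h01 : Disjoint (t 0) (t 1)) (h23 : Disjoint (t 2) (t 3)) (h45 : Disjoint (t 4) (t 5)) :
    ∃ f : Fin 6 → α, Function.Injective f ∧ ∀ i, f i ∈ t i := by
  classical
  rw [← Finset.all_card_le_biUnion_card_iff_exists_injective]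
  intro s
  rcases s.eq_empty_or_nonempty with rfl | ⟨i, hi⟩
  · simp
  by_cases h : s.card ≤ 3
  · exact h.trans ((hc i).trans (Finset.card_le_card (Finset.subset_biUnion_of_mem t hi)))
  · have h4 : 4 ≤ s.card := by omega
    have hle6 : s.card ≤ 6 := by simpa using Finset.card_le_univ s
    rcases pigeon6 s h4 with ⟨ha, hb⟩ | ⟨ha, hb⟩ | ⟨ha, hb⟩
    · have hsub := union_le_biUnion t ha hb
      have hcard : 6 ≤ (t 0 ∪ t 1).card := by
        rw [Finset.card_union_of_disjoint h01]
        have := hc 0; have := hc 1; omega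
      have := Finset.card_le_card hsub; omega
    · have hsub := union_le_biUnion t ha hb
      have hcard : 6 ≤ (t 2 ∪ t 3).card := by
        rw [Finset.card_union_of_disjoint h23]
        have := hc 2; have := hc 3; omega
      have := Finset.card_le_card hsub; omega
    · have hsub := union_le_biUnion t ha hb
      have hcard : 6 ≤ (t 4 ∪ t 5).card := by
        rw [Finset.card_union_of_disjoint h45]
        have := hc 4; have := hc 5; omega
      have := Finset.card_le_card hsub; omega

lemma erase_nonempty {s : Finset α} {a : α} (h : 1 ≤ s.card - 1) :
    ∃ b ∈ s, b ≠ a := by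
  classical
  have h2 : 1 ≤ (s.erase a).card := le_trans h Finset.pred_card_le_card_erase
  obtain ⟨b, hb⟩ := Finset.card_pos.mp h2
  rw [Finset.mem_erase] at hb
  exact ⟨b, hb.2, hb.1⟩

lemma erase_card [DecidableEq α] {s : Finset α} (a : α) (h : 3 ≤ s.card) :
    2 ≤ (s.erase a).card := by
  have := Finset.pred_card_le_card_erase (s := s) (a := a); omega

/-- List coloring of `K_{2,2}` (a 4-cycle) with lists of size `≥ 2`: parts `{b0, b1}`
and `{c0, c1}`, the cross pairs must receive distinct colors. -/
lemma key2 (B0 B1 C0 C1 : Finset α) (hB0 : 2 ≤ B0.card) (hB1 : 2 ≤ B1.card)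
    (hC0 : 2 ≤ C0.card) (hC1 : 2 ≤ C1.card) :
    ∃ b0 ∈ B0, ∃ b1 ∈ B1, ∃ c0 ∈ C0, ∃ c1 ∈ C1,
      b0 ≠ c0 ∧ b0 ≠ c1 ∧ b1 ≠ c0 ∧ b1 ≠ c1 := by
  classical
  by_cases hB : (B0 ∩ B1).Nonempty
  · obtain ⟨s, hs⟩ := hB
    rw [Finset.mem_inter] at hs
    obtain ⟨c0, hc0, hc0s⟩ := erase_nonempty (s := C0) (a := s) (by omega)
    obtain ⟨c1, hc1, hc1s⟩ := erase_nonempty (s := C1) (a := s) (by omega)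
    exact ⟨s, hs.1, s, hs.2, c0, hc0, c1, hc1, hc0s.symm, hc1s.symm, hc0s.symm, hc1s.symm⟩
  by_cases hC : (C0 ∩ C1).Nonempty
  · obtain ⟨s, hs⟩ := hC
    rw [Finset.mem_inter] at hs
    obtain ⟨b0, hb0, hb0s⟩ := erase_nonempty (s := B0) (a := s) (by omega)
    obtain ⟨b1, hb1, hb1s⟩ := erase_nonempty (s := B1) (a := s) (by omega)
    exact ⟨b0, hb0, b1, hb1, s, hs.1, s, hs.2, hb0s, hb0s, hb1s, hb1s⟩
  · have dB : Disjoint B0 B1 := by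
      rw [Finset.disjoint_iff_inter_eq_empty]
      exact Finset.not_nonempty_iff_eq_empty.mp hB
    have dC : Disjoint C0 C1 := by
      rw [Finset.disjoint_iff_inter_eq_empty]
      exact Finset.not_nonempty_iff_eq_empty.mp hC
    obtain ⟨f, hf, hmem⟩ := sdr4 ![B0, B1, C0, C1]
      (by intro i; fin_cases i <;> simpa) (by simpa) (by simpa)
    have h0 := hmem 0; have h1 := hmem 1; have h2 := hmem 2; have h3 := hmem 3
    simp only [Matrix.cons_val_zero, Matrix.cons_val_one, Matrix.head_cons,
      Matrix.cons_val_two, Matrix.tail_cons, Matrix.cons_val_three] at h0 h1 h2 h3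
    refine ⟨f 0, h0, f 1, h1, f 2, h2, f 3, h3, ?_, ?_, ?_, ?_⟩ <;>
      exact fun h => absurd (hf h) (by decide)

/-- List coloring of the octahedron `K_{2,2,2}` with lists of size `≥ 3`: three parts
`{x0, x1}`, `{y0, y1}`, `{z0, z1}`; all cross-part pairs must receive distinct colors. -/
lemma keyX (X0 X1 Y0 Y1 Z0 Z1 : Finset α) (hX0 : 3 ≤ X0.card) (hX1 : 3 ≤ X1.card)
    (hY0 : 3 ≤ Y0.card) (hY1 : 3 ≤ Y1.card) (hZ0 : 3 ≤ Z0.card) (hZ1 : 3 ≤ Z1.card) :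
    ∃ x0 ∈ X0, ∃ x1 ∈ X1, ∃ y0 ∈ Y0, ∃ y1 ∈ Y1, ∃ z0 ∈ Z0, ∃ z1 ∈ Z1,
      x0 ≠ y0 ∧ x0 ≠ y1 ∧ x1 ≠ y0 ∧ x1 ≠ y1 ∧
      x0 ≠ z0 ∧ x0 ≠ z1 ∧ x1 ≠ z0 ∧ x1 ≠ z1 ∧
      y0 ≠ z0 ∧ y0 ≠ z1 ∧ y1 ≠ z0 ∧ y1 ≠ z1 := by
  classical
  by_cases hX : (X0 ∩ X1).Nonempty
  · obtain ⟨t, ht⟩ := hX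
    rw [Finset.mem_inter] at ht
    obtain ⟨y0, hy0, y1, hy1, z0, hz0, z1, hz1, h1, h2, h3, h4⟩ :=
      key2 (Y0.erase t) (Y1.erase t) (Z0.erase t) (Z1.erase t)
        (erase_card t hY0) (erase_card t hY1) (erase_card t hZ0) (erase_card t hZ1)
    rw [Finset.mem_erase] at hy0 hy1 hz0 hz1
    exact ⟨t, ht.1, t, ht.2, y0, hy0.2, y1, hy1.2, z0, hz0.2, z1, hz1.2,
      hy0.1.symm, hy1.1.symm, hy0.1.symm, hy1.1.symm,
      hz0.1.symm, hz1.1.symm, hz0.1.symm, hz1.1.symm, h1, h2, h3, h4⟩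
  by_cases hY : (Y0 ∩ Y1).Nonempty
  · obtain ⟨t, ht⟩ := hY
    rw [Finset.mem_inter] at ht
    obtain ⟨x0, hx0, x1, hx1, z0, hz0, z1, hz1, h1, h2, h3, h4⟩ :=
      key2 (X0.erase t) (X1.erase t) (Z0.erase t) (Z1.erase t)
        (erase_card t hX0) (erase_card t hX1) (erase_card t hZ0) (erase_card t hZ1)
    rw [Finset.mem_erase] at hx0 hx1 hz0 hz1
    exact ⟨x0, hx0.2, x1, hx1.2, t, ht.1, t, ht.2, z0, hz0.2, z1, hz1.2,
      hx0.1, hx0.1, hx1.1, hx1.1, h1, h2, h3, h4,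
      hz0.1.symm, hz1.1.symm, hz0.1.symm, hz1.1.symm⟩
  by_cases hZ : (Z0 ∩ Z1).Nonempty
  · obtain ⟨t, ht⟩ := hZ
    rw [Finset.mem_inter] at ht
    obtain ⟨x0, hx0, x1, hx1, y0, hy0, y1, hy1, h1, h2, h3, h4⟩ :=
      key2 (X0.erase t) (X1.erase t) (Y0.erase t) (Y1.erase t)
        (erase_card t hX0) (erase_card t hX1) (erase_card t hY0) (erase_card t hY1)
    rw [Finset.mem_erase] at hx0 hx1 hy0 hy1
    exact ⟨x0, hx0.2, x1, hx1.2, y0, hy0.2, y1, hy1.2, t, ht.1, t, ht.2,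
      h1, h2, h3, h4, hx0.1, hx0.1, hx1.1, hx1.1, hy0.1, hy0.1, hy1.1, hy1.1⟩
  · have dX : Disjoint X0 X1 := by
      rw [Finset.disjoint_iff_inter_eq_empty]; exact Finset.not_nonempty_iff_eq_empty.mp hX
    have dY : Disjoint Y0 Y1 := by
      rw [Finset.disjoint_iff_inter_eq_empty]; exact Finset.not_nonempty_iff_eq_empty.mp hY
    have dZ : Disjoint Z0 Z1 := by
      rw [Finset.disjoint_iff_inter_eq_empty]; exact Finset.not_nonempty_iff_eq_empty.mp hZ
    obtain ⟨f, hf, hmem⟩ := sdr6 ![X0, X1, Y0, Y1, Z0, Z1]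
      (by intro i; fin_cases i <;> simpa) (by simpa) (by simpa) (by simpa)
    have h0 := hmem 0; have h1 := hmem 1; have h2 := hmem 2
    have h3 := hmem 3; have h4 := hmem 4; have h5 := hmem 5
    simp only [Matrix.cons_val_zero, Matrix.cons_val_one, Matrix.head_cons,
      Matrix.cons_val_two, Matrix.tail_cons, Matrix.cons_val_three,
      Matrix.cons_val_four, Matrix.cons_val_succ] at h0 h1 h2 h3 h4 h5
    refine ⟨f 0, h0, f 1, h1, f 2, h2, f 3, h3, f 4, h4, f 5, h5,
      ?_, ?_, ?_, ?_, ?_, ?_, ?_, ?_, ?_, ?_, ?_, ?_⟩ <;>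
      exact fun h => absurd (hf h) (by decide)

/-- Every edge of `K₃` is one of the three edges `s(0,1)`, `s(0,2)`, `s(1,2)`. -/
lemma edge3 : ∀ e ∈ (⊤ : SimpleGraph (Fin 3)).edgeSet,
    e = s(0,1) ∨ e = s(0,2) ∨ e = s(1,2) := by
  intro e he
  rw [SimpleGraph.edgeSet_top, Set.mem_compl_iff, Sym2.mem_diagSet] at he
  revert he; revert e; decide

end Aux

/-- the triangle `K₃` is totally 3-choosable. -/
theorem stmt_7 {α : Type*} (Lv : Fin 3 → Finset α) (Le : Sym2 (Fin 3) → Finset α)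
    (hLv : ∀ v : Fin 3, 3 ≤ (Lv v).card)
    (hLe : ∀ e ∈ (⊤ : SimpleGraph (Fin 3)).edgeSet, 3 ≤ (Le e).card) :
    ∃ (fv : Fin 3 → α) (fe : Sym2 (Fin 3) → α),
      (∀ v : Fin 3, fv v ∈ Lv v) ∧
      (∀ e ∈ (⊤ : SimpleGraph (Fin 3)).edgeSet, fe e ∈ Le e) ∧
      IsTotalColoring (⊤ : SimpleGraph (Fin 3)) fv fe := by
  classical
  have he01 : s(0,1) ∈ (⊤ : SimpleGraph (Fin 3)).edgeSet := by
    rw [SimpleGraph.mem_edgeSet]; decide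
  have he02 : s(0,2) ∈ (⊤ : SimpleGraph (Fin 3)).edgeSet := by
    rw [SimpleGraph.mem_edgeSet]; decide
  have he12 : s(1,2) ∈ (⊤ : SimpleGraph (Fin 3)).edgeSet := by
    rw [SimpleGraph.mem_edgeSet]; decide
  obtain ⟨x0, hx0, x1, hx1, y0, hy0, y1, hy1, z0, hz0, z1, hz1,
      hxy00, hxy01, hxy10, hxy11, hxz00, hxz01, hxz10, hxz11,
      hyz00, hyz01, hyz10, hyz11⟩ :=
    keyX (Lv 0) (Le s(1,2)) (Lv 1) (Le s(0,2)) (Lv 2) (Le s(0,1))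
      (hLv 0) (hLe _ he12) (hLv 1) (hLe _ he02) (hLv 2) (hLe _ he01)
  set fv : Fin 3 → α := ![x0, y0, z0] with hfv
  set fe : Sym2 (Fin 3) → α :=
    fun e => if e = s(0,1) then z1 else if e = s(0,2) then y1 else x1 with hfe
  have ne21 : (s(0,2) : Sym2 (Fin 3)) ≠ s(0,1) := by decide
  have ne31 : (s(1,2) : Sym2 (Fin 3)) ≠ s(0,1) := by decide
  have ne32 : (s(1,2) : Sym2 (Fin 3)) ≠ s(0,2) := by decide
  have fe01 : fe s(0,1) = z1 := if_pos rfl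
  have fe02 : fe s(0,2) = y1 := by simp [hfe, ne21]
  have fe12 : fe s(1,2) = x1 := by simp [hfe, ne31, ne32]
  refine ⟨fv, fe, ?_, ?_, ?_, ?_, ?_⟩
  · intro v; fin_cases v <;> simpa [fv]
  · intro e he
    rcases edge3 e he with rfl | rfl | rfl
    · rw [fe01]; exact hz1
    · rw [fe02]; exact hy1
    · rw [fe12]; exact hx1
  · intro u v huv
    rw [top_adj] at huv
    fin_cases u <;> fin_cases v <;>
      first
        | exact absurd rfl huv
        | (simp only [fv, Matrix.cons_val_zero, Matrix.cons_val_one, Matrix.head_cons,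
            Matrix.cons_val_two, Matrix.tail_cons]
           first
             | assumption
             | exact hxy00.symm | exact hxz00.symm | exact hyz00.symm)
  · intro e1 e2 he1 he2 hne _
    rcases edge3 e1 he1 with rfl | rfl | rfl <;> rcases edge3 e2 he2 with rfl | rfl | rfl <;>
      simp only [fe01, fe02, fe12] <;>
      first
        | exact absurd rfl hne
        | assumption
        | exact hxy11.symm | exact hxz11.symm | exact hyz11.symm
  · intro v e he hv
    rcases edge3 e he with rfl | rfl | rfl <;> fin_cases v <;>
      first
        | exact absurd hv (by decide)
        | (simp only [fe01, fe02, fe12, fv, Matrix.cons_val_zero, Matrix.cons_val_one,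
            Matrix.head_cons, Matrix.cons_val_two, Matrix.tail_cons]
           first
             | assumption
             | exact hxy10.symm | exact hxz10.symm | exact hyz10.symm)
end

section
/- For every graph G with maximum degree at most 2, χ''(G) ≤ Δ(G) + 2, i.e., the Total Coloring Conjecture holds for graphs of maximum degree at most 2. -/
open SimpleGraph

variable {V : Type*}

def pat (cyc : Bool) (n : ℕ) (i : ℕ) : ℕ :=
  if cyc then
    (if (2*n) % 4 = 0 then i % 4 else if i < 6 then i % 3 else (i+2) % 4)
  else i % 4

lemma pat_lt (cyc : Bool) (n i : ℕ) : pat cyc n i < 4 := by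
  simp only [pat]; split_ifs <;> omega

lemma pat_path_ne {n i j : ℕ} (hne : i ≠ j) (h2 : i ≤ j + 2) (h3 : j ≤ i + 2) :
    pat false n i ≠ pat false n j := by
  simp only [pat, if_neg Bool.false_ne_true]; omega

lemma pat_cyc_ne {n i j : ℕ} (hn : 3 ≤ n) (hi : i < 2*n) (hj : j < 2*n) (hne : i ≠ j)
    (h : (i ≤ j + 2 ∧ j ≤ i + 2) ∨ (i + (2*n-2) ≤ j ∨ j + (2*n-2) ≤ i)) :
    pat true n i ≠ pat true n j := by
  simp only [pat, if_pos rfl]; split_ifs <;> omega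

def ecol (c : Bool) (nn iu iw : ℕ) : ℕ :=
  if c = true ∧ ((iu = 0 ∧ iw = nn - 1) ∨ (iw = 0 ∧ iu = nn - 1)) then pat c nn (2 * nn - 1)
  else pat c nn (iu + iw)

lemma ecol_symm (c : Bool) (nn iu iw : ℕ) : ecol c nn iu iw = ecol c nn iw iu := by
  unfold ecol
  rw [Nat.add_comm iu iw]
  exact if_congr (by tauto) rfl rfl

lemma ecol_lt (c : Bool) (nn iu iw : ℕ) : ecol c nn iu iw < 4 := by
  unfold ecol; split_ifs <;> apply pat_lt

lemma two_le_deg [Finite V] {G : SimpleGraph V} {v x y : V} (hx : G.Adj v x) (hy : G.Adj v y)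
    (hxy : x ≠ y) : 2 ≤ deg G v := by
  have hsub : ({x, y} : Set V) ⊆ G.neighborSet v := by
    intro z hz; rcases hz with rfl | rfl <;> assumption
  calc 2 = ({x, y} : Set V).ncard := (Set.ncard_pair hxy).symm
    _ ≤ _ := Set.ncard_le_ncard hsub (G.neighborSet v).toFinite

lemma three_le_deg' [Finite V] {G : SimpleGraph V} {v x y z : V} (hx : G.Adj v x) (hy : G.Adj v y)
    (hz : G.Adj v z) (hxy : x ≠ y) (hxz : x ≠ z) (hyz : y ≠ z) : 3 ≤ deg G v := by
  have hsub : ({x, y, z} : Set V) ⊆ G.neighborSet v := by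
    intro w hw; rcases hw with rfl | rfl | rfl <;> assumption
  have h3 : ({x, y, z} : Set V).ncard = 3 := by
    rw [Set.ncard_insert_of_notMem (by simp [hxy, hxz]) (Set.toFinite _),
      Set.ncard_pair hyz]
  calc 3 = ({x, y, z} : Set V).ncard := h3.symm
    _ ≤ _ := Set.ncard_le_ncard hsub (G.neighborSet v).toFinite

lemma edge_rep {G : SimpleGraph V} {e : Sym2 V} (he : e ∈ G.edgeSet) {w : V} (hw : w ∈ e) :
    ∃ x, G.Adj w x ∧ e = Sym2.mk w x := by
  induction e with
  | _ a b =>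
    rw [Sym2.mem_iff] at hw
    rw [mem_edgeSet] at he
    rcases hw with rfl | rfl
    · exact ⟨b, he, rfl⟩
    · exact ⟨a, he.symm, Sym2.eq_swap⟩

lemma deg_pos_of_adj [Finite V] {G : SimpleGraph V} {u w : V} (h : G.Adj u w) : 0 < deg G u := by
  rw [deg, Set.ncard_pos (G.neighborSet u).toFinite]
  exact ⟨w, h⟩

lemma enum_component [Fintype V] (G : SimpleGraph V) (hdeg : ∀ v, deg G v ≤ 2) (v : V) :
    ∃ (l : List V) (cyc : Bool), l.Nodup ∧ (∀ u, u ∈ l ↔ G.Reachable v u) ∧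
      (∀ (i j : ℕ) (hi : i < l.length) (hj : j < l.length),
        G.Adj (l[i]'hi) (l[j]'hj) ↔ (j = i + 1 ∨ i = j + 1 ∨
          (cyc = true ∧ ((i = 0 ∧ j = l.length - 1) ∨ (j = 0 ∧ i = l.length - 1))))) ∧
      (cyc = true → 3 ≤ l.length) := by
  classical
  set S : Set ℕ := {n | ∃ (a b : V) (p : G.Walk a b), p.IsPath ∧ G.Reachable v a ∧ p.length = n}
    with hS
  have hS0 : 0 ∈ S := ⟨v, v, Walk.nil, Walk.IsPath.nil, Reachable.refl v, rfl⟩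
  have hSbdd : BddAbove S := by
    refine ⟨Fintype.card V, fun n hn => ?_⟩
    obtain ⟨a, b, p, hp, -, rfl⟩ := hn
    exact hp.length_lt.le
  obtain ⟨a, b, p, hp, ha, hlen⟩ := Nat.sSup_mem ⟨0, hS0⟩ hSbdd
  have hmax : ∀ (a' b' : V) (q : G.Walk a' b'), q.IsPath → G.Reachable v a' →
      q.length ≤ p.length := by
    intro a' b' q hq hra
    rw [hlen]; exact le_csSup hSbdd ⟨a', b', q, hq, hra, rfl⟩
  set l := p.support with hl
  have hnodup : l.Nodup := hp.support_nodup
  have hlenl : l.length = p.length + 1 := p.length_support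
  have hlpos : 0 < l.length := by omega
  have hinj : ∀ (i j : ℕ) (hi : i < l.length) (hj : j < l.length),
      l[i]'hi = l[j]'hj → i = j := by
    intro i j hi hj h
    have h2 : l.get ⟨i, hi⟩ = l.get ⟨j, hj⟩ := by simpa using h
    have := List.nodup_iff_injective_get.mp hnodup h2
    exact congrArg Fin.val this
  have hchain : List.Chain' G.Adj l := by
    have := p.isChain_adj_support; rw [← hl] at this; exact this
  have hadjc : ∀ (k : ℕ) (h : k + 1 < l.length),
      G.Adj (l[k]'(Nat.lt_of_succ_lt h)) (l[k+1]'h) := by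
    intro k h
    have := List.isChain_iff_getElem.mp hchain k (by omega)
    simpa using this
  have hhead : l[0]'hlpos = a := by
    have h2 := p.support_eq_cons
    rw [← hl] at h2
    rw [List.getElem_of_eq h2]
    simp
  have hlast : l[l.length - 1]'(by omega) = b := by
    have h2 := p.getLast_support
    rw [List.getLast_eq_getElem] at h2
    exact h2
  -- reachability of support members
  have hmem1 : ∀ u, u ∈ l → G.Reachable v u := by
    intro u hu
    exact ha.trans ⟨p.takeUntil u hu⟩
  have hvb : G.Reachable v b := ha.trans ⟨p⟩
  -- endpoints have all neighbors in l
  have hfront : ∀ w, G.Adj w a → w ∈ l := by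
    intro w hw
    by_contra hwl
    have hq : (Walk.cons hw p).IsPath := (Walk.cons_isPath_iff _ _).2 ⟨hp, hwl⟩
    have := hmax w b (Walk.cons hw p) hq (ha.trans hw.symm.reachable)
    simp [Walk.length_cons] at this
  have hback : ∀ w, G.Adj w b → w ∈ l := by
    intro w hw
    by_contra hwl
    have hwl' : w ∉ p.reverse.support := by
      rw [Walk.support_reverse]; simpa using hwl
    have hq : (Walk.cons hw p.reverse).IsPath := (Walk.cons_isPath_iff _ _).2 ⟨hp.reverse, hwl'⟩
    have := hmax w a (Walk.cons hw p.reverse) hq (hvb.trans hw.symm.reachable)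
    simp [Walk.length_cons] at this
  -- closure of support under adjacency
  have hclosed : ∀ x y, G.Adj x y → x ∈ l → y ∈ l := by
    intro x y hxy hx
    by_contra hy
    obtain ⟨i, hi, rfl⟩ := List.mem_iff_getElem.mp hx
    rcases Nat.eq_zero_or_pos i with rfl | hi0
    · rw [hhead] at hxy; exact hy (hfront y hxy.symm)
    rcases eq_or_ne i (l.length - 1) with hil | hil
    · subst hil; rw [hlast] at hxy; exact hy (hback y hxy.symm)
    · have hi1 : i + 1 < l.length := by omega
      have hadj1 : G.Adj (l[i]'hi) (l[i+1]'hi1) := hadjc i hi1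
      have hadj2 : G.Adj (l[i]'hi) (l[i-1]'(by omega)) := by
        have := hadjc (i-1) (by omega)
        have h2 : i - 1 + 1 = i := by omega
        exact (by simp_rw [h2] at this; exact this.symm)
      refine absurd (hdeg (l[i]'hi)) (by
        have h3 := three_le_deg' hadj1 hadj2 hxy
          (fun h => by have := hinj _ _ hi1 (by omega) h; omega)
          (fun h => hy (h ▸ List.getElem_mem _))
          (fun h => hy (h ▸ List.getElem_mem _))
        omega)
  have hmemiff : ∀ u, u ∈ l ↔ G.Reachable v u := by
    intro u
    refine ⟨hmem1 u, fun hru => ?_⟩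
    have haux : ∀ (x y : V) (q : G.Walk x y), x ∈ l → y ∈ l := by
      intro x y q
      induction q with
      | nil => exact id
      | cons hadj q ih => exact fun hx => ih (hclosed _ _ hadj hx)
    obtain ⟨q⟩ := ha.symm.trans hru
    have hal : a ∈ l := by rw [hl]; exact p.start_mem_support
    exact haux _ _ q hal
  have hadjc' : ∀ (i j : ℕ) (hi : i < l.length) (hj : j < l.length), j = i + 1 →
      G.Adj (l[i]'hi) (l[j]'hj) := by
    intro i j hi hj h
    subst h
    exact hadjc i hj
  have hchord : ∀ (i j : ℕ) (hi : i < l.length) (hj : j < l.length),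
      G.Adj (l[i]'hi) (l[j]'hj) → i < j → j = i + 1 ∨ (i = 0 ∧ j = l.length - 1) := by
    intro i j hi hj hadj hij
    by_contra hcon
    push_neg at hcon
    obtain ⟨hj1, hcon2⟩ := hcon
    have hij2 : i + 2 ≤ j := by omega
    rcases Nat.eq_zero_or_pos i with rfl | hi0
    · have hjl : j + 1 < l.length := by
        rcases eq_or_ne j (l.length - 1) with h | h
        · exact absurd h (hcon2 rfl)
        · omega
      have ha1 : G.Adj (l[j]'hj) (l[j-1]'(by omega)) :=
        (hadjc' (j-1) j (by omega) hj (by omega)).symm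
      have ha2 : G.Adj (l[j]'hj) (l[j+1]'hjl) := hadjc j hjl
      have h3 := three_le_deg' ha1 ha2 hadj.symm
        (fun h => by have := hinj _ _ (by omega) hjl h; omega)
        (fun h => by have := hinj _ _ (by omega) hi h; omega)
        (fun h => by have := hinj _ _ hjl hi h; omega)
      have := hdeg (l[j]'hj); omega
    · have hi1 : i + 1 < l.length := by omega
      have ha1 : G.Adj (l[i]'hi) (l[i-1]'(by omega)) :=
        (hadjc' (i-1) i (by omega) hi (by omega)).symm
      have ha2 : G.Adj (l[i]'hi) (l[i+1]'hi1) := hadjc i hi1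
      have h3 := three_le_deg' ha1 ha2 hadj
        (fun h => by have := hinj _ _ (by omega) hi1 h; omega)
        (fun h => by have := hinj _ _ (by omega) hj h; omega)
        (fun h => by have := hinj _ _ hi1 hj h; omega)
      have := hdeg (l[i]'hi); omega
  by_cases hcyc : 3 ≤ l.length ∧ G.Adj (l[0]'hlpos) (l[l.length - 1]'(by omega))
  · refine ⟨l, true, hnodup, hmemiff, ?_, fun _ => hcyc.1⟩
    intro i j hi hj
    constructor
    · intro hadj
      have hne' : i ≠ j := by rintro rfl; exact hadj.ne rfl
      rcases Nat.lt_or_ge i j with h | h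
      · rcases hchord i j hi hj hadj h with h1 | h1
        · exact Or.inl h1
        · exact Or.inr (Or.inr ⟨rfl, Or.inl h1⟩)
      · have hji : j < i := by omega
        rcases hchord j i hj hi hadj.symm hji with h1 | h1
        · exact Or.inr (Or.inl h1)
        · exact Or.inr (Or.inr ⟨rfl, Or.inr h1⟩)
    · rintro (rfl | rfl | ⟨-, ⟨rfl, rfl⟩ | ⟨rfl, rfl⟩⟩)
      · exact hadjc i hj
      · exact (hadjc j hi).symm
      · exact hcyc.2
      · exact hcyc.2.symm
  · refine ⟨l, false, hnodup, hmemiff, ?_, by simp⟩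
    intro i j hi hj
    constructor
    · intro hadj
      have hne' : i ≠ j := by rintro rfl; exact hadj.ne rfl
      rcases Nat.lt_or_ge i j with h | h
      · rcases hchord i j hi hj hadj h with h1 | h1
        · exact Or.inl h1
        · obtain ⟨rfl, rfl⟩ := h1
          by_cases h3 : 3 ≤ l.length
          · exact absurd ⟨h3, hadj⟩ hcyc
          · exact Or.inl (by omega)
      · have hji : j < i := by omega
        rcases hchord j i hj hi hadj.symm hji with h1 | h1
        · exact Or.inr (Or.inl h1)
        · obtain ⟨rfl, rfl⟩ := h1
          by_cases h3 : 3 ≤ l.length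
          · exact absurd ⟨h3, hadj.symm⟩ hcyc
          · exact Or.inr (Or.inl (by omega))
    · rintro (rfl | rfl | ⟨h, -⟩)
      · exact hadjc i hj
      · exact (hadjc j hi).symm
      · simp at h

lemma coloring_of_enum [DecidableEq V] (G : SimpleGraph V) (L : V → List V) (C : V → Bool)
    (hcoh : ∀ u w, G.Reachable u w → L u = L w ∧ C u = C w)
    (hself : ∀ v, v ∈ L v)
    (hadj : ∀ v (i j : ℕ) (hi : i < (L v).length) (hj : j < (L v).length),
        G.Adj ((L v)[i]'hi) ((L v)[j]'hj) ↔ (j = i + 1 ∨ i = j + 1 ∨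
          (C v = true ∧ ((i = 0 ∧ j = (L v).length - 1) ∨ (j = 0 ∧ i = (L v).length - 1)))))
    (hcy : ∀ v, C v = true → 3 ≤ (L v).length) :
    HasTotalColoring G 4 := by
  classical
  set idx : V → ℕ := fun v => (L v).idxOf v with hidx
  set nn : V → ℕ := fun v => (L v).length with hnn
  have hlt : ∀ v, idx v < nn v := fun v => List.idxOf_lt_length_iff.mpr (hself v)
  have hget : ∀ v, (L v)[idx v]'(hlt v) = v := fun v => List.getElem_idxOf _
  -- translate adjacency into index facts
  have hKey : ∀ u w, G.Adj u w → L w = L u ∧ C w = C u ∧ idx u ≠ idx w ∧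
      idx w < nn u ∧
      (idx w = idx u + 1 ∨ idx u = idx w + 1 ∨ (C u = true ∧
        ((idx u = 0 ∧ idx w = nn u - 1) ∨ (idx w = 0 ∧ idx u = nn u - 1)))) := by
    intro u w hA
    obtain ⟨hLw, hCw⟩ := hcoh u w hA.reachable
    have hwmem : w ∈ L u := hLw ▸ hself w
    have hidxw : idx w = (L u).idxOf w := by simp only [hidx, hLw]
    have hiwlt : idx w < nn u := by
      rw [hidxw, hnn]; exact List.idxOf_lt_length_iff.mpr hwmem
    have hgetw : (L u)[idx w]'hiwlt = w := by
      simp only [hidxw]; exact List.getElem_idxOf _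
    have hA' : G.Adj ((L u)[idx u]'(hlt u)) ((L u)[idx w]'hiwlt) := by
      rw [hget u, hgetw]; exact hA
    have hdis := (hadj u (idx u) (idx w) (hlt u) hiwlt).mp hA'
    have hne : idx u ≠ idx w := by
      intro h
      have : (L u)[idx u]'(hlt u) = (L u)[idx w]'hiwlt := by congr 1
      rw [hget u, hgetw] at this
      exact hA.ne this
    exact ⟨hLw.symm, hCw.symm, hne, hiwlt, hdis⟩
  have hinj2 : ∀ x y : V, L x = L y → idx x = idx y → x = y := by
    intro x y hLxy hixy
    have h1 : (L x)[idx x]'(hlt x) = x := hget x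
    have h2 : (L y)[idx y]'(hlt y) = y := hget y
    rw [← h1, ← h2]
    congr 1
  -- the natural-number colorings
  set fvn : V → ℕ := fun v => pat (C v) (nn v) (2 * idx v) with hfvn
  have hsym : ∀ u w : V, (if G.Adj u w then ecol (C u) (nn u) (idx u) (idx w) else 0) =
      (if G.Adj w u then ecol (C w) (nn w) (idx w) (idx u) else 0) := by
    intro u w
    by_cases h : G.Adj u w
    · rw [if_pos h, if_pos h.symm]
      obtain ⟨hL1, hC1, -⟩ := hKey u w h
      have hn1 : nn w = nn u := by simp only [hnn, hL1]
      rw [hn1, hC1, ecol_symm]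
    · rw [if_neg h, if_neg (fun h' => h h'.symm)]
  set fen : Sym2 V → ℕ := Sym2.lift ⟨fun u w => if G.Adj u w then
      ecol (C u) (nn u) (idx u) (idx w) else 0, hsym⟩ with hfen
  have hfen_mk : ∀ u w, fen (Sym2.mk u w) =
      (if G.Adj u w then ecol (C u) (nn u) (idx u) (idx w) else 0) := by
    intro u w; simp [hfen]
  -- condition 1 : adjacent vertices
  have hc1 : ∀ u w, G.Adj u w → fvn u ≠ fvn w := by
    intro u w hA
    obtain ⟨hL1, hC1, hne, hiwlt, hdis⟩ := hKey u w hA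
    have hn1 : nn w = nn u := by simp only [hnn, hL1]
    simp only [hfvn, hC1, hn1]
    cases hcu : C u with
    | false =>
      rw [hcu] at hdis
      simp only [Bool.false_eq_true, false_and, false_or, or_false] at hdis
      exact pat_path_ne (by omega) (by omega) (by omega)
    | true =>
      have h3' : 3 ≤ nn u := hcy u hcu
      rw [hcu] at hdis
      simp only [true_and] at hdis
      refine pat_cyc_ne (n := nn u) h3' ?_ ?_ ?_ ?_
      · have := hlt u; omega
      · omega
      · omega
      · omega
  -- condition 2 : edges sharing a vertex
  have hc2 : ∀ (w x y : V), G.Adj w x → G.Adj w y → x ≠ y →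
      ecol (C w) (nn w) (idx w) (idx x) ≠ ecol (C w) (nn w) (idx w) (idx y) := by
    intro w x y hax hay hxy
    obtain ⟨hLx, hCx, hnex, hixlt, hdisx⟩ := hKey w x hax
    obtain ⟨hLy, hCy, hney, hiylt, hdisy⟩ := hKey w y hay
    have hixy : idx x ≠ idx y := fun h => hxy (hinj2 x y (hLx.trans hLy.symm) h)
    have hlw := hlt w
    unfold ecol
    cases hcw : C w with
    | false =>
      rw [hcw] at hdisx hdisy
      simp only [Bool.false_eq_true, false_and, false_or, or_false] at hdisx hdisy
      simp only [Bool.false_eq_true, false_and, if_false]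
      exact pat_path_ne (by omega) (by omega) (by omega)
    | true =>
      have h3' : 3 ≤ nn w := hcy w hcw
      rw [hcw] at hdisx hdisy
      simp only [true_and] at hdisx hdisy ⊢
      split_ifs with h1 h2 h2
      · exfalso; omega
      · refine pat_cyc_ne h3' ?_ ?_ ?_ ?_ <;> omega
      · refine pat_cyc_ne h3' ?_ ?_ ?_ ?_ <;> omega
      · refine pat_cyc_ne h3' ?_ ?_ ?_ ?_ <;> omega
  -- condition 3 : vertex and incident edge
  have hc3 : ∀ (w x : V), G.Adj w x →
      fvn w ≠ ecol (C w) (nn w) (idx w) (idx x) := by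
    intro w x hax
    simp only [hfvn]
    obtain ⟨hLx, hCx, hnex, hixlt, hdisx⟩ := hKey w x hax
    have hlw := hlt w
    unfold ecol
    cases hcw : C w with
    | false =>
      rw [hcw] at hdisx
      simp only [Bool.false_eq_true, false_and, false_or, or_false] at hdisx
      simp only [Bool.false_eq_true, false_and, if_false]
      exact pat_path_ne (by omega) (by omega) (by omega)
    | true =>
      have h3' : 3 ≤ nn w := hcy w hcw
      rw [hcw] at hdisx
      simp only [true_and] at hdisx ⊢
      split_ifs with h1
      · refine pat_cyc_ne h3' ?_ ?_ ?_ ?_ <;> omega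
      · refine pat_cyc_ne h3' ?_ ?_ ?_ ?_ <;> omega
  -- assemble
  have hfvlt : ∀ v, fvn v < 4 := fun v => pat_lt _ _ _
  have hfelt : ∀ e, fen e < 4 := by
    intro e
    induction e with
    | _ a b =>
      rw [hfen_mk]
      split_ifs
      · apply ecol_lt
      · omega
  refine ⟨fun v => ⟨fvn v, hfvlt v⟩, fun e => ⟨fen e, hfelt e⟩, ?_, ?_, ?_⟩
  · intro u w hA h
    exact hc1 u w hA (by simpa using congrArg Fin.val h)
  · rintro e₁ e₂ he₁ he₂ hne12 ⟨w, hw1, hw2⟩ h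
    obtain ⟨x, hax, rfl⟩ := edge_rep he₁ hw1
    obtain ⟨y, hay, rfl⟩ := edge_rep he₂ hw2
    have hxy : x ≠ y := fun h' => hne12 (by rw [h'])
    have hval : fen (Sym2.mk w x) = fen (Sym2.mk w y) := by simpa using congrArg Fin.val h
    rw [hfen_mk, hfen_mk, if_pos hax, if_pos hay] at hval
    exact hc2 w x y hax hay hxy hval
  · intro v e he hv h
    obtain ⟨x, hax, rfl⟩ := edge_rep he hv
    have hval : fvn v = fen (Sym2.mk v x) := by simpa using congrArg Fin.val h
    rw [hfen_mk, if_pos hax] at hval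
    exact hc3 v x hax hval


lemma hasTotalColoring_four [Fintype V] (G : SimpleGraph V) (hdeg : ∀ v, deg G v ≤ 2) :
    HasTotalColoring G 4 := by
  classical
  choose L0 C0 hnd hmem hadj hcy using enum_component G hdeg
  set rep : V → V := fun v => (G.connectedComponentMk v).out with hrep
  have hrepr : ∀ v, G.Reachable (rep v) v := by
    intro v
    have h1 : G.connectedComponentMk (rep v) = G.connectedComponentMk v := by
      simp only [hrep]
      exact Quot.out_eq _
    exact SimpleGraph.ConnectedComponent.eq.mp h1
  have hrepeq : ∀ u w, G.Reachable u w → rep u = rep w := by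
    intro u w h
    simp only [hrep, ConnectedComponent.sound h]
  refine coloring_of_enum G (fun v => L0 (rep v)) (fun v => C0 (rep v)) ?_ ?_ ?_ ?_
  · intro u w h
    rw [hrepeq u w h]
    exact ⟨rfl, rfl⟩
  · intro v; rw [hmem (rep v) v]; exact hrepr v
  · intro v i j hi hj; exact hadj (rep v) i j hi hj
  · intro v h; exact hcy (rep v) h

lemma hasTotalColoring_three [Fintype V] (G : SimpleGraph V) (hdeg : ∀ v, deg G v ≤ 1) :
    HasTotalColoring G 3 := by
  classical
  have huniq : ∀ {v x y : V}, G.Adj v x → G.Adj v y → x = y := by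
    intro v x y hx hy
    by_contra h
    have h1 := two_le_deg hx hy h
    have h2 := hdeg v; omega
  set r : V → ℕ := fun v => ((Fintype.equivFin V) v : ℕ) with hr
  have hrinj : ∀ u w : V, r u = r w → u = w := by
    intro u w h
    exact (Fintype.equivFin V).injective (Fin.val_injective h)
  set fv : V → Fin 3 := fun v => if ∃ w, G.Adj v w ∧ r v < r w then 0 else 1 with hfv
  have hkey : ∀ u w, G.Adj u w → r u < r w → fv u = 0 ∧ fv w = 1 := by
    intro u w h hlt
    constructor
    · simp only [hfv]; rw [if_pos ⟨w, h, hlt⟩]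
    · simp only [hfv]
      rw [if_neg ?_]
      rintro ⟨x, hx, hltx⟩
      have hxu : x = u := huniq hx h.symm
      subst hxu; omega
  refine ⟨fv, fun _ => 2, ?_, ?_, ?_⟩
  · intro u w h hf
    have hne : r u ≠ r w := fun he => h.ne (hrinj _ _ he)
    rcases Nat.lt_or_ge (r u) (r w) with hlt | hge
    · obtain ⟨h0, h1⟩ := hkey u w h hlt
      rw [h0, h1] at hf; exact absurd hf (by decide)
    · have hlt : r w < r u := by omega
      obtain ⟨h0, h1⟩ := hkey w u h.symm hlt
      rw [h0, h1] at hf; exact absurd hf (by decide)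
  · rintro e₁ e₂ he₁ he₂ hne ⟨w, hw1, hw2⟩
    obtain ⟨x, hax, rfl⟩ := edge_rep he₁ hw1
    obtain ⟨y, hay, rfl⟩ := edge_rep he₂ hw2
    intro _
    exact hne (by rw [huniq hax hay])
  · intro v e he hv hf
    simp only [hfv] at hf
    split_ifs at hf <;> exact absurd hf (by decide)

lemma hasTotalColoring_two (G : SimpleGraph V) (hadj : ∀ u w, ¬ G.Adj u w) :
    HasTotalColoring G 2 := by
  have hkey : ∀ e : Sym2 V, e ∈ G.edgeSet → False := by
    intro e
    exact Sym2.ind (fun a b h => hadj a b (G.mem_edgeSet.mp h)) e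
  refine ⟨fun _ => 0, fun _ => 0, ?_, ?_, ?_⟩
  · intro u w h; exact absurd h (hadj u w)
  · intro e₁ e₂ he₁ _ _ _; exact absurd he₁ (hkey e₁)
  · intro v e he _; exact absurd he (hkey e)


/-- the Total Coloring Conjecture holds for graphs of maximum degree
at most 2: `χ''(G) ≤ Δ(G) + 2`. -/
theorem stmt_19 {V : Type*} [Fintype V] (G : SimpleGraph V)
    (hΔ : maxDeg G ≤ 2) :
    totalChromaticNumber G ≤ maxDeg G + 2 := by
  classical
  have hdegle : ∀ v, deg G v ≤ maxDeg G := by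
    intro v
    exact le_ciSup (Set.finite_range (deg G)).bddAbove v
  rcases (by omega : maxDeg G = 0 ∨ maxDeg G = 1 ∨ maxDeg G = 2) with h | h | h <;> rw [h]
  · refine Nat.sInf_le (show HasTotalColoring G 2 from ?_)
    apply hasTotalColoring_two
    intro u w hA
    have h1 := deg_pos_of_adj hA
    have h2 := hdegle u
    omega
  · refine Nat.sInf_le (show HasTotalColoring G 3 from ?_)
    exact hasTotalColoring_three G (fun v => by have := hdegle v; rw [h] at this; exact this)
  · refine Nat.sInf_le (show HasTotalColoring G 4 from ?_)
    exact hasTotalColoring_four G (fun v => by have := hdegle v; rw [h] at this; exact this)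
end
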